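/- Let z₁, z₂ : ℝ → ℂ∖{0} be differentiable solutions of dz/dφ = 1/f(φ) − (n/f(φ))·z/|z| + i·z, with f positive. Then L(φ) := |z₁(φ) − z₂(φ)|² satisfies dL/dφ = −(2n/f(φ))·(|z₁| + |z₂|)·(1 − cos(ζ₁ − ζ₂)), where ζⱼ = arg zⱼ; in particular dL/dφ ≤ 0, so L is non-increasing. -/

import Mathlib

open Complex

/-- Contraction of the squared distance between two solutions of the complex pursuit
ODE: `L := |z₁ − z₂|²` satisfies
`dL/dφ = −(2n/f)(|z₁| + |z₂|)(1 − cos(ζ₁ − ζ₂)) ≤ 0`, where `ζⱼ = arg zⱼ`. -/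
theorem squared_distance_decreasing (n : ℝ) (hn : 0 < n)
    (f : ℝ → ℝ) (hfpos : ∀ φ, 0 < f φ)
    (z₁ z₂ : ℝ → ℂ) (hz₁ : Differentiable ℝ z₁) (hz₂ : Differentiable ℝ z₂)
    (hz₁0 : ∀ φ, z₁ φ ≠ 0) (hz₂0 : ∀ φ, z₂ φ ≠ 0)
    (hode₁ : ∀ φ, deriv z₁ φ =
      ((1 / f φ : ℝ) : ℂ) - ((n / f φ : ℝ) : ℂ) * (z₁ φ / ((‖z₁ φ‖ : ℝ) : ℂ))
        + Complex.I * z₁ φ)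
    (hode₂ : ∀ φ, deriv z₂ φ =
      ((1 / f φ : ℝ) : ℂ) - ((n / f φ : ℝ) : ℂ) * (z₂ φ / ((‖z₂ φ‖ : ℝ) : ℂ))
        + Complex.I * z₂ φ)
    (L : ℝ → ℝ) (hL : ∀ φ, L φ = ‖z₁ φ - z₂ φ‖ ^ 2) :
    ∀ φ, deriv L φ = -(2 * n / f φ) * (‖z₁ φ‖ + ‖z₂ φ‖)
        * (1 - Real.cos (Complex.arg (z₁ φ) - Complex.arg (z₂ φ))) ∧
      deriv L φ ≤ 0 := by
  intro φ
  have hf := hfpos φ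
  set a : ℂ := z₁ φ with ha
  set b : ℂ := z₂ φ with hb
  set ρ₁ : ℝ := ‖a‖ with hρ₁def
  set ρ₂ : ℝ := ‖b‖ with hρ₂def
  have hρ₁ : (0:ℝ) < ρ₁ := norm_pos_iff.mpr (hz₁0 φ)
  have hρ₂ : (0:ℝ) < ρ₂ := norm_pos_iff.mpr (hz₂0 φ)
  -- derivative of the difference
  set c : ℂ := deriv z₁ φ - deriv z₂ φ with hcdef
  have hu : HasDerivAt (fun t => z₁ t - z₂ t) c φ :=
    ((hz₁ φ).hasDerivAt).sub ((hz₂ φ).hasDerivAt)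
  have hre : HasDerivAt (fun t => (z₁ t - z₂ t).re) c.re φ :=
    Complex.reCLM.hasFDerivAt.comp_hasDerivAt φ hu
  have him : HasDerivAt (fun t => (z₁ t - z₂ t).im) c.im φ :=
    Complex.imCLM.hasFDerivAt.comp_hasDerivAt φ hu
  have hLfun : L = fun t => (z₁ t - z₂ t).re * (z₁ t - z₂ t).re
      + (z₁ t - z₂ t).im * (z₁ t - z₂ t).im := by
    funext t
    rw [hL t, Complex.sq_norm, Complex.normSq_apply]
  have hLD : HasDerivAt L
      ((c.re * (a - b).re + (a - b).re * c.re) + (c.im * (a - b).im + (a - b).im * c.im)) φ := by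
    rw [hLfun]
    exact (hre.mul hre).add (him.mul him)
  have hderivL : deriv L φ =
      2 * ((a - b).re * c.re + (a - b).im * c.im) := by
    rw [hLD.deriv]; ring
  -- compute c.re and c.im
  have hc : c = -(((n / f φ : ℝ)) : ℂ) * (a / (ρ₁:ℂ) - b / (ρ₂:ℂ)) + Complex.I * (a - b) := by
    rw [hcdef, hode₁ φ, hode₂ φ]; ring
  have hc2 : c = -(((n / f φ : ℝ)) : ℂ) * (a * ((ρ₁⁻¹ : ℝ) : ℂ) - b * ((ρ₂⁻¹ : ℝ) : ℂ))
      + Complex.I * (a - b) := by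
    rw [hc]
    push_cast
    rw [div_eq_mul_inv a, div_eq_mul_inv b]
  have hcre : c.re = -(n / f φ) * (a.re / ρ₁ - b.re / ρ₂) - (a.im - b.im) := by
    rw [hc2]
    simp [Complex.add_re, Complex.mul_re, Complex.sub_re, Complex.sub_im, div_eq_mul_inv]
    field_simp
    ring
  have hcim : c.im = -(n / f φ) * (a.im / ρ₁ - b.im / ρ₂) + (a.re - b.re) := by
    rw [hc2]
    simp [Complex.add_im, Complex.mul_im, Complex.sub_re, Complex.sub_im, div_eq_mul_inv]
    field_simp
  -- trig facts
  have hca : Real.cos a.arg = a.re / ρ₁ := Complex.cos_arg (hz₁0 φ)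
  have hsa : Real.sin a.arg = a.im / ρ₁ := Complex.sin_arg a
  have hcb : Real.cos b.arg = b.re / ρ₂ := Complex.cos_arg (hz₂0 φ)
  have hsb : Real.sin b.arg = b.im / ρ₂ := Complex.sin_arg b
  have h1 : a.re ^ 2 + a.im ^ 2 = ρ₁ ^ 2 := by
    rw [hρ₁def, Complex.sq_norm, Complex.normSq_apply]; ring
  have h2 : b.re ^ 2 + b.im ^ 2 = ρ₂ ^ 2 := by
    rw [hρ₂def, Complex.sq_norm, Complex.normSq_apply]; ring
  have hcos : Real.cos (a.arg - b.arg) = (a.re * b.re + a.im * b.im) / (ρ₁ * ρ₂) := by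
    rw [Real.cos_sub, hca, hsa, hcb, hsb]
    field_simp
  have key : deriv L φ = -(2 * n / f φ) * (ρ₁ + ρ₂)
      * (1 - Real.cos (a.arg - b.arg)) := by
    rw [hderivL, hcre, hcim, hcos]
    field_simp
    simp only [Complex.sub_re, Complex.sub_im]
    linear_combination (-n * ρ₂) * h1 + (-n * ρ₁) * h2
  refine ⟨key, ?_⟩
  rw [key]
  have hcosle : Real.cos (a.arg - b.arg) ≤ 1 := Real.cos_le_one _
  have : 0 ≤ (2 * n / f φ) * (ρ₁ + ρ₂) * (1 - Real.cos (a.arg - b.arg)) := by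
    apply mul_nonneg
    apply mul_nonneg
    · positivity
    · positivity
    · linarith
  linarith
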